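/- Let q ≥ 2 and n ≥ 1 be integers and let g ∈ F_q be any function other than the constant-one function 1_q. Then the subset Φ = F_q \ {g} is n-cell implementable under scenario (•∗) if and only if q ≤ n + 1. -/

import Mathlib

/-- The alphabet 𝔹• = {0, 1, ∗, •}. -/
inductive BB : Type
  | zero
  | one
  | star
  | reject
deriving DecidableEq

instance : Fintype BB :=
  ⟨{BB.zero, BB.one, BB.star, BB.reject}, fun x => by cases x <;> first | decide | simp⟩

/-- The cell function T : 𝔹• × 𝔹• → 𝔹: T(u,ϑ) = 1 iff u = ∗, or ϑ = ∗,
or u,ϑ ∈ 𝔹 with u = ϑ. -/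
def Tcell : BB → BB → Bool
  | BB.star, _ => true
  | _, BB.star => true
  | BB.zero, BB.zero => true
  | BB.one, BB.one => true
  | _, _ => false

/-- The word-level function T(u,ϑ) = ⋀_{j<n} T(u_j, ϑ_j). -/
def Tword {n : ℕ} (u θ : Fin n → BB) : Bool :=
  decide (∀ j, Tcell (u j) (θ j) = true)

/-- The alphabet 𝔹 = {0,1} ⊆ 𝔹•. -/
def Bcirc : Set BB := {BB.zero, BB.one}

/-- The alphabet 𝔹∗ = {0,1,∗} ⊆ 𝔹•. -/
def Bstar : Set BB := {BB.zero, BB.one, BB.star}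

/-- The full alphabet 𝔹•. -/
def Bdot : Set BB := Set.univ

/-- A family Φ of functions {0,…,q−1} → 𝔹 is n-cell implementable under
scenario (A,B) if there are mappings u : {0,…,q−1} → A^n and ϑ : Φ → B^n
with f(x) = T(u(x), ϑ(f)) for all f ∈ Φ and x. -/
def Implementable (A B : Set BB) (n q : ℕ) (Φ : Set (Fin q → Bool)) : Prop :=
  ∃ u : Fin q → Fin n → BB, ∃ θ : (Fin q → Bool) → Fin n → BB,
    (∀ x j, u x j ∈ A) ∧ (∀ f ∈ Φ, ∀ j, θ f j ∈ B) ∧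
    (∀ f ∈ Φ, ∀ x, f x = Tword (u x) (θ f))

/-- The family 𝓔_q = { x ↦ [x = t] : t ∈ [q⟩ }. -/
def Eset (q : ℕ) : Set (Fin q → Bool) :=
  { f | ∃ t : Fin q, f = fun x => decide (x = t) }

/-- The family 𝓝_q = { x ↦ [x ≠ t] : t ∈ [q⟩ }. -/
def Nset (q : ℕ) : Set (Fin q → Bool) :=
  { f | ∃ t : Fin q, f = fun x => decide (x ≠ t) }

/-- The family 𝓖_q = { x ↦ [x ≥ t] : t ∈ [q⟩ }. -/
def Gset (q : ℕ) : Set (Fin q → Bool) :=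
  { f | ∃ t : Fin q, f = fun x => decide (t ≤ x) }

/-- The family 𝓛_q = { x ↦ [x ≤ t] : t ∈ [q⟩ }. -/
def Lset (q : ℕ) : Set (Fin q → Bool) :=
  { f | ∃ t : Fin q, f = fun x => decide (x ≤ t) }

/- ------------------------------------------------------------------ -/
/- Auxiliary material for the proof.                                   -/
/- ------------------------------------------------------------------ -/

/-- Meet of two symbols in the order • ≤ 0,1 ≤ ∗. -/
def bmeet : BB → BB → BB
  | BB.star, b => b
  | BB.zero, BB.zero => BB.zero
  | BB.zero, BB.star => BB.zero
  | BB.one, BB.one => BB.one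
  | BB.one, BB.star => BB.one
  | _, _ => BB.reject

lemma Tcell_star_right : ∀ a, Tcell a BB.star = true := by decide
lemma Tcell_star_left : ∀ a, Tcell BB.star a = true := by decide
lemma Tcell_bmeet : ∀ a b c, Tcell (bmeet a b) c = (Tcell a c && Tcell b c) := by decide
lemma BBL1 : ∀ (a β β' : BB), (β = BB.zero ∨ β = BB.one) → (β' = BB.zero ∨ β' = BB.one) →
    β ≠ β' → Tcell a β = false → Tcell a β' = true → a = β' := by
  intro a β β' h1 h2 h3 h4 h5
  rcases h1 with rfl | rfl <;> rcases h2 with rfl | rfl <;> rcases a <;> simp_all [Tcell]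
lemma BBL2 : ∀ (c β β' : BB), (β = BB.zero ∨ β = BB.one) → (β' = BB.zero ∨ β' = BB.one) →
    β ≠ β' → Tcell c β = true → Tcell c β' = true → c = BB.star := by
  intro c β β' h1 h2 h3 h4 h5
  rcases h1 with rfl | rfl <;> rcases h2 with rfl | rfl <;> rcases c <;> simp_all [Tcell]
lemma BBL3 : ∀ (a b c : BB), (a = BB.zero ∨ a = BB.one) → (b = BB.zero ∨ b = BB.one) →
    a ≠ b → (c = BB.zero ∨ c = BB.one ∨ c = BB.star) → Tcell a c = false → Tcell b c = true := by
  intro a b c h1 h2 h3 h4 h5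
  rcases h1 with rfl | rfl <;> rcases h2 with rfl | rfl <;>
    rcases h4 with rfl | rfl | rfl <;> simp_all [Tcell]

/-- Key combinatorial lemma: if every subset of a finite set `X` is exactly the
match set (within `X`) of some pattern over `{0,1,∗}` supported on `J`, then
`|X| ≤ |J|`. -/
lemma key_lemma (q n : ℕ) : ∀ (N : ℕ) (X : Finset (Fin q)) (J : Finset (Fin n))
    (u : Fin q → Fin n → BB), X.card ≤ N →
    (∀ S : Finset (Fin q), S ⊆ X → ∃ γ : Fin n → BB, (∀ j, γ j ∈ Bstar) ∧
      (∀ j, j ∉ J → γ j = BB.star) ∧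
      (∀ x ∈ X, (x ∈ S ↔ ∀ j, Tcell (u x j) (γ j) = true))) →
    X.card ≤ J.card := by
  intro N
  induction N with
  | zero => intro X J u h _; omega
  | succ N ih =>
    intro X J u hcard H
    rcases X.eq_empty_or_nonempty with rfl | ⟨x0, hx0⟩
    · simp
    -- certificates
    have cert : ∀ x ∈ X, ∃ j, j ∈ J ∧ ∃ β : BB, (β = BB.zero ∨ β = BB.one) ∧
        Tcell (u x j) β = false ∧ (∀ z ∈ X, z ≠ x → Tcell (u z j) β = true) := by
      intro x hx
      obtain ⟨γ, hγB, hγJ, hiff⟩ := H (X.erase x) (Finset.erase_subset _ _)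
      have hxf : ¬ (∀ j, Tcell (u x j) (γ j) = true) := by
        intro hall
        have hmem := (hiff x hx).mpr hall
        simp at hmem
      push_neg at hxf
      obtain ⟨j, hj⟩ := hxf
      have hj : Tcell (u x j) (γ j) = false := by simpa using hj
      have hjJ : j ∈ J := by
        by_contra hc
        rw [hγJ j hc, Tcell_star_right] at hj
        exact absurd hj (by simp)
      have hB := hγB j
      simp only [Bstar, Set.mem_insert_iff, Set.mem_singleton_iff] at hB
      have hβ : γ j = BB.zero ∨ γ j = BB.one := by
        rcases hB with h | h | h
        · exact Or.inl h
        · exact Or.inr h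
        · rw [h, Tcell_star_right] at hj; exact absurd hj (by simp)
      exact ⟨j, hjJ, γ j, hβ, hj,
        fun z hz hzx => (hiff z hz).mp (Finset.mem_erase.mpr ⟨hzx, hz⟩) j⟩
    choose jx hjJ βx hβ01 hfail hpass using cert
    by_cases hinj : ∀ x (hx : x ∈ X) (y : Fin q) (hy : y ∈ X), jx x hx = jx y hy → x = y
    · -- injective case
      apply Finset.card_le_card_of_injOn (fun x => if hx : x ∈ X then jx x hx else jx x0 hx0)
      · intro x hx
        simp only [Finset.mem_coe] at hx
        simp only [dif_pos hx]
        exact hjJ x hx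
      · intro a ha b hb hab
        simp only [Finset.mem_coe] at ha hb
        simp only [dif_pos ha, dif_pos hb] at hab
        exact hinj a ha b hb hab
    · push_neg at hinj
      obtain ⟨x, hx, y, hy, hjeq, hne⟩ := hinj
      set j := jx x hx with hjdef
      set bx := βx x hx with hbxdef
      set by2 := βx y hy with hby2def
      have hfx : Tcell (u x j) bx = false := hfail x hx
      have hfy : Tcell (u y j) by2 = false := by
        have := hfail y hy; rwa [← hjeq] at this
      have hpx : ∀ z ∈ X, z ≠ x → Tcell (u z j) bx = true := hpass x hx
      have hpy : ∀ z ∈ X, z ≠ y → Tcell (u z j) by2 = true := by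
        intro z hz hzy
        have := hpass y hy z hz hzy
        rwa [← hjeq] at this
      have hbxy : bx ≠ by2 := by
        intro h
        have h1 := hpy x hx hne
        rw [← h] at h1
        rw [h1] at hfx
        exact absurd hfx (by simp)
      have ha : u x j = by2 := BBL1 _ bx by2 (hβ01 x hx) (hβ01 y hy) hbxy hfx (hpy x hx hne)
      have hb : u y j = bx := BBL1 _ by2 bx (hβ01 y hy) (hβ01 x hx) hbxy.symm hfy
        (hpx y hy hne.symm)
      have hax : u x j = BB.zero ∨ u x j = BB.one := by rw [ha]; exact hβ01 y hy
      have hbx : u y j = BB.zero ∨ u y j = BB.one := by rw [hb]; exact hβ01 x hx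
      have habne : u x j ≠ u y j := by rw [ha, hb]; exact hbxy.symm
      have hstarz : ∀ z ∈ X, z ≠ x → z ≠ y → u z j = BB.star := by
        intro z hz h1 h2
        exact BBL2 _ bx by2 (hβ01 x hx) (hβ01 y hy) hbxy (hpx z hz h1) (hpy z hz h2)
      set u' : Fin q → Fin n → BB :=
        Function.update u x (fun j' => bmeet (u x j') (u y j')) with hu'def
      have hu'x : ∀ j', u' x j' = bmeet (u x j') (u y j') := by
        intro j'; rw [hu'def, Function.update_self]
      have hu'z : ∀ z, z ≠ x → u' z = u z := by
        intro z hz; rw [hu'def, Function.update_of_ne hz]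
      have newH : ∀ S : Finset (Fin q), S ⊆ X.erase y →
          ∃ γ : Fin n → BB, (∀ j', γ j' ∈ Bstar) ∧
          (∀ j', j' ∉ J.erase j → γ j' = BB.star) ∧
          (∀ z ∈ X.erase y, (z ∈ S ↔ ∀ j', Tcell (u' z j') (γ j') = true)) := by
        intro S hS
        have hSX : S ⊆ X := hS.trans (Finset.erase_subset _ _)
        have hyS : y ∉ S := fun h => (Finset.mem_erase.mp (hS h)).1 rfl
        by_cases hxS : x ∈ S
        · -- use pattern for insert y S
          obtain ⟨γ, hγB, hγJ, hiff⟩ := H (insert y S) (Finset.insert_subset hy hSX)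
          refine ⟨Function.update γ j BB.star, ?_, ?_, ?_⟩
          · intro j'
            by_cases h : j' = j
            · subst h; rw [Function.update_self]; simp [Bstar]
            · rw [Function.update_of_ne h]; exact hγB j'
          · intro j' hj'
            by_cases h : j' = j
            · subst h; rw [Function.update_self]
            · rw [Function.update_of_ne h]
              exact hγJ j' (fun hmem => hj' (Finset.mem_erase.mpr ⟨h, hmem⟩))
          · intro z hz
            obtain ⟨hzy, hzX⟩ := Finset.mem_erase.mp hz
            by_cases hzx : z = x
            · subst hzx
              have hall : ∀ j', Tcell (u' z j') (Function.update γ j BB.star j') = true := by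
                intro j'
                by_cases h : j' = j
                · subst h; rw [Function.update_self]; exact Tcell_star_right _
                · rw [Function.update_of_ne h, hu'x, Tcell_bmeet]
                  have h1 := (hiff z hzX).mp (Finset.mem_insert_of_mem hxS) j'
                  have h2 := (hiff y hy).mp (Finset.mem_insert_self y S) j'
                  rw [h1, h2]; rfl
              exact ⟨fun _ => hall, fun _ => hxS⟩
            · rw [hu'z z hzx]
              have hz_star : u z j = BB.star := hstarz z hzX hzx hzy
              constructor
              · intro hzS j'
                by_cases h : j' = j
                · subst h; rw [hz_star]; exact Tcell_star_left _
                · rw [Function.update_of_ne h]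
                  exact (hiff z hzX).mp (Finset.mem_insert_of_mem hzS) j'
              · intro hall
                have hmem : z ∈ insert y S := by
                  apply (hiff z hzX).mpr
                  intro j'
                  by_cases h : j' = j
                  · subst h; rw [hz_star]; exact Tcell_star_left _
                  · have := hall j'; rwa [Function.update_of_ne h] at this
                rcases Finset.mem_insert.mp hmem with h | h
                · exact absurd h hzy
                · exact h
        · -- x ∉ S : use pattern for S
          obtain ⟨γ, hγB, hγJ, hiff⟩ := H S hSX
          have hγBor : γ j = BB.zero ∨ γ j = BB.one ∨ γ j = BB.star := by
            have := hγB j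
            simpa [Bstar, Set.mem_insert_iff, Set.mem_singleton_iff] using this
          have hxfail : ∃ j₁, Tcell (u x j₁) (γ j₁) = false := by
            have h1 : ¬ (∀ j₁, Tcell (u x j₁) (γ j₁) = true) :=
              fun hall => hxS ((hiff x hx).mpr hall)
            push_neg at h1
            obtain ⟨j₁, h⟩ := h1
            exact ⟨j₁, by simpa using h⟩
          have hyfail : ∃ j₂, Tcell (u y j₂) (γ j₂) = false := by
            have h1 : ¬ (∀ j₂, Tcell (u y j₂) (γ j₂) = true) :=
              fun hall => hyS ((hiff y hy).mpr hall)
            push_neg at h1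
            obtain ⟨j₂, h⟩ := h1
            exact ⟨j₂, by simpa using h⟩
          obtain ⟨j₁, hj₁⟩ := hxfail
          obtain ⟨j₂, hj₂⟩ := hyfail
          have hwitness : ∃ j₃, j₃ ≠ j ∧ Tcell (u' x j₃) (γ j₃) = false := by
            by_cases h1 : j₁ = j
            · have hyj : Tcell (u y j) (γ j) = true := by
                apply BBL3 (u x j) (u y j) (γ j) hax hbx habne hγBor
                rw [← h1]; exact hj₁
              have h2 : j₂ ≠ j := by
                intro h
                rw [h] at hj₂
                rw [hj₂] at hyj
                exact absurd hyj (by simp)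
              refine ⟨j₂, h2, ?_⟩
              rw [hu'x, Tcell_bmeet, hj₂, Bool.and_false]
            · refine ⟨j₁, h1, ?_⟩
              rw [hu'x, Tcell_bmeet, hj₁, Bool.false_and]
          refine ⟨Function.update γ j BB.star, ?_, ?_, ?_⟩
          · intro j'
            by_cases h : j' = j
            · subst h; rw [Function.update_self]; simp [Bstar]
            · rw [Function.update_of_ne h]; exact hγB j'
          · intro j' hj'
            by_cases h : j' = j
            · subst h; rw [Function.update_self]
            · rw [Function.update_of_ne h]
              exact hγJ j' (fun hmem => hj' (Finset.mem_erase.mpr ⟨h, hmem⟩))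
          · intro z hz
            obtain ⟨hzy, hzX⟩ := Finset.mem_erase.mp hz
            by_cases hzx : z = x
            · subst hzx
              constructor
              · intro h; exact absurd h hxS
              · intro hall
                exfalso
                obtain ⟨j₃, hj₃ne, hj₃⟩ := hwitness
                have := hall j₃
                rw [Function.update_of_ne hj₃ne, hj₃] at this
                exact absurd this (by simp)
            · rw [hu'z z hzx]
              have hz_star : u z j = BB.star := hstarz z hzX hzx hzy
              constructor
              · intro hzS j'
                by_cases h : j' = j
                · subst h; rw [hz_star]; exact Tcell_star_left _
                · rw [Function.update_of_ne h]
                  exact (hiff z hzX).mp hzS j'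
              · intro hall
                apply (hiff z hzX).mpr
                intro j'
                by_cases h : j' = j
                · subst h; rw [hz_star]; exact Tcell_star_left _
                · have := hall j'; rwa [Function.update_of_ne h] at this
      have hX'card : (X.erase y).card ≤ N := by
        rw [Finset.card_erase_of_mem hy]; omega
      have hres := ih (X.erase y) (J.erase j) u' hX'card newH
      rw [Finset.card_erase_of_mem hy, Finset.card_erase_of_mem (hjJ x hx)] at hres
      have hXpos : 0 < X.card := Finset.card_pos.mpr ⟨x, hx⟩
      have hJpos : 0 < J.card := Finset.card_pos.mpr ⟨j, hjJ x hx⟩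
      omega

/-- The element of `Fin q` different from `y` associated with column `j`. -/
def zOf (q : ℕ) (y : Fin q) (j : ℕ) (h : j < q - 1) : Fin q :=
  if j < (y : ℕ) then ⟨j, by omega⟩ else ⟨j + 1, by omega⟩

lemma zOf_ne (q : ℕ) (y : Fin q) (j : ℕ) (h : j < q - 1) : zOf q y j h ≠ y := by
  unfold zOf
  split_ifs with hc
  · intro he
    rw [Fin.ext_iff] at he
    simp only at he
    omega
  · intro he
    rw [Fin.ext_iff] at he
    simp only at he
    omega

/-- The column associated with an element `x ≠ y`. -/
def jOf (q : ℕ) (y x : Fin q) : ℕ :=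
  if (x : ℕ) < (y : ℕ) then (x : ℕ) else (x : ℕ) - 1

lemma jOf_lt (q : ℕ) (y x : Fin q) (hxy : x ≠ y) : jOf q y x < q - 1 := by
  have h1 : (x : ℕ) < q := x.isLt
  have h2 : (y : ℕ) < q := y.isLt
  have h3 : (x : ℕ) ≠ (y : ℕ) := fun h => hxy (Fin.ext h)
  unfold jOf
  split_ifs with hc <;> omega

lemma zOf_jOf (q : ℕ) (y x : Fin q) (hxy : x ≠ y) (h : jOf q y x < q - 1) :
    zOf q y (jOf q y x) h = x := by
  have h3 : (x : ℕ) ≠ (y : ℕ) := fun hh => hxy (Fin.ext hh)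
  apply Fin.ext
  unfold zOf jOf
  unfold jOf at h
  split_ifs with h1 h2 h2 <;> simp only <;> omega

lemma zOf_eq_imp (q : ℕ) (y x : Fin q) (j : ℕ) (h : j < q - 1)
    (hz : zOf q y j h = x) : j = jOf q y x := by
  have := zOf_ne q y j h
  rw [hz] at this
  have h3 : (x : ℕ) ≠ (y : ℕ) := fun hh => this (Fin.ext hh)
  rw [Fin.ext_iff] at hz
  unfold zOf at hz
  unfold jOf
  split_ifs at hz ⊢ with h1 h2 h2 <;> simp only at hz <;> omega

/-- Construction: word table. -/
def consU (q n : ℕ) (y : Fin q) (g : Fin q → Bool) : Fin q → Fin n → BB := fun x j =>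
  if h : (j : ℕ) < q - 1 then
    if x = y then BB.zero
    else if x = zOf q y (j : ℕ) h then (if g x = true then BB.reject else BB.one)
    else BB.star
  else BB.star

/-- Construction: pattern table. -/
def consTh (q n : ℕ) (y : Fin q) (g : Fin q → Bool) (f : Fin q → Bool) : Fin n → BB := fun j =>
  if h : (j : ℕ) < q - 1 then
    if f y = true then (if f (zOf q y (j : ℕ) h) = true then BB.star else BB.zero)
    else if f (zOf q y (j : ℕ) h) = true then
      (if g (zOf q y (j : ℕ) h) = true then BB.star else BB.one)
    else (if g (zOf q y (j : ℕ) h) = true then BB.one else BB.zero)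
  else BB.star

theorem Fset_minus_g_implementable_rejectStar (q n : ℕ) (hq : 2 ≤ q) (hn : 1 ≤ n)
    (g : Fin q → Bool) (hg1 : g ≠ fun _ => true) :
    Implementable Bdot Bstar n q ({g}ᶜ) ↔ q ≤ n + 1 := by
  classical
  have hy' : ∃ y, g y = false := by
    by_contra hc
    push_neg at hc
    apply hg1
    funext x
    cases hgx : g x with
    | false => exact absurd hgx (hc x)
    | true => rfl
  obtain ⟨y, hgy⟩ := hy'
  constructor
  · rintro ⟨u, θ, hu, hθ, himp⟩
    have happ := key_lemma q n (Finset.univ.erase y).card (Finset.univ.erase y)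
      (Finset.univ : Finset (Fin n)) u le_rfl ?_
    · rw [Finset.card_erase_of_mem (Finset.mem_univ y)] at happ
      simp only [Finset.card_univ, Fintype.card_fin] at happ
      omega
    · intro S hS
      set f : Fin q → Bool := fun x => decide (x ∈ S ∨ x = y) with hf
      have hfy : f y = true := by simp [hf]
      have hfg : f ≠ g := by
        intro h
        rw [h, hgy] at hfy
        exact absurd hfy (by simp)
      have hfmem : f ∈ ({g}ᶜ : Set (Fin q → Bool)) := by simpa using hfg
      refine ⟨θ f, hθ f hfmem, fun j hj => absurd (Finset.mem_univ j) hj, fun z hz => ?_⟩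
      obtain ⟨hzy, _⟩ := Finset.mem_erase.mp hz
      have h1 := himp f hfmem z
      have h2 : f z = decide (z ∈ S) := by simp [hf, hzy]
      constructor
      · intro hzS
        have h3 : f z = true := by rw [h2]; simpa using hzS
        rw [h3] at h1
        have h4 : Tword (u z) (θ f) = true := h1.symm
        rw [Tword, decide_eq_true_eq] at h4
        exact h4
      · intro hall
        have h3 : Tword (u z) (θ f) = true := by
          rw [Tword, decide_eq_true_eq]; exact hall
        rw [← h1, h2] at h3
        simpa using h3
  · intro hqn
    have hq1n : q - 1 ≤ n := by omega
    refine ⟨consU q n y g, consTh q n y g, fun x j => Set.mem_univ _, ?_, ?_⟩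
    · intro f hf j
      simp only [consTh]
      split_ifs <;> simp [Bstar]
    · intro f hf x
      have hfg : f ≠ g := by simpa using hf
      by_cases hxy : x = y
      · subst hxy
        cases hfy : f x with
        | false =>
          symm
          rw [Tword, decide_eq_false_iff_not]
          intro hall
          obtain ⟨a, hfa⟩ := Function.ne_iff.mp hfg
          have hay : a ≠ x := by
            intro h
            rw [h, hfy, hgy] at hfa
            exact hfa rfl
          have hjlt : jOf q x a < q - 1 := jOf_lt q x a hay
          set jj : Fin n := ⟨jOf q x a, by omega⟩ with hjj
          have hjval : ((jj : Fin n) : ℕ) = jOf q x a := rfl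
          have := hall jj
          rw [consU, consTh] at this
          simp only [hjval] at this
          rw [dif_pos hjlt, dif_pos hjlt] at this
          simp only [if_true] at this
          rw [zOf_jOf q x a hay hjlt] at this
          rw [hfy] at this
          simp only [Bool.false_eq_true, if_false] at this
          cases hfa2 : f a with
          | true =>
            have hga : g a = false := by
              cases hga2 : g a with
              | false => rfl
              | true => rw [hfa2, hga2] at hfa; exact absurd rfl hfa
            rw [hfa2, hga] at this
            simp [Tcell] at this
          | false =>
            have hga : g a = true := by
              cases hga2 : g a with
              | false => rw [hfa2, hga2] at hfa; exact absurd rfl hfa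
              | true => rfl
            rw [hfa2, hga] at this
            simp [Tcell] at this
        | true =>
          symm
          rw [Tword, decide_eq_true_eq]
          intro j
          rw [consU, consTh]
          by_cases h : (j : ℕ) < q - 1
          · rw [dif_pos h, dif_pos h, if_pos rfl, hfy]
            simp only [if_true]
            split_ifs <;> simp [Tcell]
          · rw [dif_neg h]
            exact Tcell_star_left _
      · -- x ≠ y
        have hjlt : jOf q y x < q - 1 := jOf_lt q y x hxy
        set j0 : Fin n := ⟨jOf q y x, by omega⟩ with hj0
        have hz0 : zOf q y ((j0 : Fin n) : ℕ) hjlt = x := zOf_jOf q y x hxy hjlt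
        have hustar : ∀ j : Fin n, j ≠ j0 → consU q n y g x j = BB.star := by
          intro j hj
          rw [consU]
          by_cases h : (j : ℕ) < q - 1
          · rw [dif_pos h, if_neg hxy]
            rw [if_neg]
            intro hzx
            apply hj
            have := zOf_eq_imp q y x (j : ℕ) h hzx.symm
            apply Fin.ext
            rw [hj0]
            simp only []
            omega
          · rw [dif_neg h]
        have huj0 : consU q n y g x j0 = (if g x = true then BB.reject else BB.one) := by
          rw [consU, dif_pos hjlt, if_neg hxy, if_pos hz0.symm]
        have hthj0 : consTh q n y g f j0 =
            (if f y = true then (if f x = true then BB.star else BB.zero)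
             else if f x = true then (if g x = true then BB.star else BB.one)
             else (if g x = true then BB.one else BB.zero)) := by
          rw [consTh, dif_pos hjlt, hz0]
        cases hfx : f x with
        | true =>
          symm
          rw [Tword, decide_eq_true_eq]
          intro j
          by_cases hj : j = j0
          · subst hj
            rw [huj0, hthj0, hfx]
            cases hfy : f y with
            | true => simp only [if_true]; split_ifs <;> simp [Tcell]
            | false =>
              simp only [Bool.false_eq_true, if_false, if_true]
              split_ifs <;> simp [Tcell]
          · rw [hustar j hj]
            exact Tcell_star_left _
        | false =>
          symm
          rw [Tword, decide_eq_false_iff_not]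
          intro hall
          have := hall j0
          rw [huj0, hthj0, hfx] at this
          cases hfy : f y with
          | true =>
            rw [hfy] at this
            simp only [if_true, Bool.false_eq_true, if_false] at this
            split_ifs at this <;> simp [Tcell] at this
          | false =>
            rw [hfy] at this
            simp only [Bool.false_eq_true, if_false] at this
            split_ifs at this <;> simp [Tcell] at this
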